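/- The divergence-modified integrator Alg(f)(x) = x + f(x)(1 + div f(x)) is NOT fully affine equivariant: there exist a non-invertible (surjective) affine map a : ℝ² → ℝ¹ and related smooth vector fields f₁ on ℝ² and f₂ on ℝ (f₂ ∘ a = Ta ∘ f₁) such that Alg(f₂) ∘ a ≠ a ∘ Alg(f₁). -/
import Mathlib

noncomputable def divVF {d : ℕ} (f : (Fin d → ℝ) → (Fin d → ℝ)) (x : Fin d → ℝ) : ℝ :=
  LinearMap.trace ℝ (Fin d → ℝ) (fderiv ℝ f x : (Fin d → ℝ) →ₗ[ℝ] (Fin d → ℝ))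

noncomputable def divAlg {d : ℕ} (f : (Fin d → ℝ) → (Fin d → ℝ)) (x : Fin d → ℝ) :
    Fin d → ℝ :=
  x + (1 + divVF f x) • f x

private noncomputable def L2 : (Fin 2 → ℝ) →ₗ[ℝ] (Fin 1 → ℝ) :=
  LinearMap.pi (fun _ => LinearMap.proj 0)

private def F1 : (Fin 2 → ℝ) → (Fin 2 → ℝ) := fun x => ![x 0, (x 1) ^ 2]

private noncomputable def D1 (z : Fin 2 → ℝ) : (Fin 2 → ℝ) →L[ℝ] (Fin 2 → ℝ) :=
  ContinuousLinearMap.pi ![ContinuousLinearMap.proj 0,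
    (2 * z 1) • ContinuousLinearMap.proj 1]

lemma hproj (i : Fin 2) (z : Fin 2 → ℝ) : HasFDerivAt (fun x : Fin 2 → ℝ => x i)
    (ContinuousLinearMap.proj i : (Fin 2 → ℝ) →L[ℝ] ℝ) z :=
  (ContinuousLinearMap.proj i : (Fin 2 → ℝ) →L[ℝ] ℝ).hasFDerivAt

lemma hasF1 (z : Fin 2 → ℝ) : HasFDerivAt F1 (D1 z) z := by
  rw [hasFDerivAt_pi']
  intro i
  fin_cases i
  · have h0 := hproj 0 z
    have he : (fun x : Fin 2 → ℝ => F1 x 0) = fun x => x 0 := by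
      funext x; simp [F1]
    have hD : ((ContinuousLinearMap.proj (0 : Fin 2)).comp (D1 z)) =
        (ContinuousLinearMap.proj 0 : (Fin 2 → ℝ) →L[ℝ] ℝ) := by
      ext u; simp [D1]
    show HasFDerivAt (fun x => F1 x 0) ((ContinuousLinearMap.proj (0 : Fin 2)).comp (D1 z)) z
    rw [he, hD]; exact h0
  · have h1 : HasFDerivAt (fun x : Fin 2 → ℝ => (x 1) * (x 1))
        (z 1 • (ContinuousLinearMap.proj 1 : (Fin 2 → ℝ) →L[ℝ] ℝ)
          + z 1 • (ContinuousLinearMap.proj 1)) z := (hproj 1 z).mul (hproj 1 z)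
    have he : (fun x : Fin 2 → ℝ => F1 x 1) = fun x => (x 1) * (x 1) := by
      funext x; simp [F1, sq]
    have hD : ((ContinuousLinearMap.proj (1 : Fin 2)).comp (D1 z)) =
        z 1 • (ContinuousLinearMap.proj 1 : (Fin 2 → ℝ) →L[ℝ] ℝ)
          + z 1 • (ContinuousLinearMap.proj 1) := by
      ext u; simp [D1]; ring
    show HasFDerivAt (fun x => F1 x 1) ((ContinuousLinearMap.proj (1 : Fin 2)).comp (D1 z)) z
    rw [he, hD]; exact h1

lemma divF1 (z : Fin 2 → ℝ) : divVF F1 z = 1 + 2 * z 1 := by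
  have hd := (hasF1 z).fderiv
  rw [divVF, hd, LinearMap.trace_eq_matrix_trace ℝ (Pi.basisFun ℝ (Fin 2))]
  rw [Matrix.trace]
  simp [Fin.sum_univ_two, LinearMap.toMatrix_apply, D1, Matrix.diag]

lemma divF2 (y : Fin 1 → ℝ) : divVF (id : (Fin 1 → ℝ) → (Fin 1 → ℝ)) y = 1 := by
  rw [divVF, fderiv_id]
  simp

/-- The divergence-modified integrator is NOT fully affine equivariant: there exist
a surjective non-injective (hence non-invertible) affine map `a : ℝ² → ℝ¹` and
related smooth vector fields `f₁` on `ℝ²` and `f₂` on `ℝ¹` (`f₂ ∘ a = a.linear ∘ f₁`)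
such that `Alg f₂ ∘ a ≠ a ∘ Alg f₁`. -/
theorem divAlg_not_fully_affine_equivariant :
    ∃ (a : (Fin 2 → ℝ) →ᵃ[ℝ] (Fin 1 → ℝ))
      (f₁ : (Fin 2 → ℝ) → (Fin 2 → ℝ)) (f₂ : (Fin 1 → ℝ) → (Fin 1 → ℝ)),
      ContDiff ℝ 1 f₁ ∧ ContDiff ℝ 1 f₂ ∧
      Function.Surjective a ∧ ¬ Function.Injective a ∧
      (∀ x, f₂ (a x) = a.linear (f₁ x)) ∧
      ∃ z, divAlg f₂ (a z) ≠ a (divAlg f₁ z) := by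
  refine ⟨L2.toAffineMap, F1, id, ?_, contDiff_id, ?_, ?_, ?_, ![1, 1], ?_⟩
  · rw [contDiff_pi]
    intro i
    fin_cases i
    · show ContDiff ℝ 1 fun x : Fin 2 → ℝ => F1 x 0
      have : (fun x : Fin 2 → ℝ => F1 x 0) = fun x => x 0 := by funext x; simp [F1]
      rw [this]
      exact (ContinuousLinearMap.proj 0 : (Fin 2 → ℝ) →L[ℝ] ℝ).contDiff
    · show ContDiff ℝ 1 fun x : Fin 2 → ℝ => F1 x 1
      have : (fun x : Fin 2 → ℝ => F1 x 1) = fun x => (x 1) * (x 1) := by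
        funext x; simp [F1, sq]
      rw [this]
      exact ((ContinuousLinearMap.proj 1 : (Fin 2 → ℝ) →L[ℝ] ℝ).contDiff).mul
        ((ContinuousLinearMap.proj 1 : (Fin 2 → ℝ) →L[ℝ] ℝ).contDiff)
  · intro y
    refine ⟨fun _ => y 0, ?_⟩
    ext i
    fin_cases i
    simp [L2, LinearMap.toAffineMap]
  · intro h
    have := h (a₁ := ![0, 0]) (a₂ := ![0, 1]) (by ext i; fin_cases i <;> simp [L2, LinearMap.toAffineMap])
    have h1 : (![0,0] : Fin 2 → ℝ) 1 = (![0,1] : Fin 2 → ℝ) 1 := by rw [this]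
    norm_num at h1
  · intro x
    ext i
    fin_cases i
    simp [L2, LinearMap.toAffineMap, F1]
  · have ha : ∀ x : Fin 2 → ℝ, L2.toAffineMap x = fun _ => x 0 := by
      intro x; ext i; fin_cases i; simp [L2, LinearMap.toAffineMap]
    intro h
    have := congrFun h 0
    rw [ha, ha] at this
    norm_num [divAlg, divF1, divF2, F1] at this
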